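/- For every λ > 0 and every n, Gutman's test φ_n^Gut with threshold λ satisfies, for all pairs of distributions (P̃1,P̃2) on X, β1(φ_n^Gut|P̃1,P̃2) ≤ (n + N + 1)^{|X|}·exp(−nλ), where N = ⌈αn⌉. -/

import Mathlib

open Filter Topology MeasureTheory

namespace Classification

variable {X : Type*} [Fintype X] [DecidableEq X]

/-- `P` is a probability mass function on the finite alphabet `X`. -/
def IsDist (P : X → ℝ) : Prop := (∀ x, 0 ≤ P x) ∧ ∑ x, P x = 1

/-- `P` has full support. -/
def FullSupport (P : X → ℝ) : Prop := ∀ x, 0 < P x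

/-- Empirical distribution (type) of a sequence `x : Fin m → X`. -/
noncomputable def empDist {m : ℕ} (x : Fin m → X) : X → ℝ :=
  fun a => ((Finset.univ.filter fun i => x i = a).card : ℝ) / m

/-- Real-valued KL divergence with the usual `0 · log 0 = 0` convention. -/
noncomputable def klDivR (Q P : X → ℝ) : ℝ := ∑ x, Q x * Real.log (Q x / P x)

open Classical in
/-- Extended-real-valued KL divergence: `⊤` when `Q` is not absolutely continuous w.r.t. `P`. -/
noncomputable def klDivE (Q P : X → ℝ) : EReal :=
  if ∀ x, P x = 0 → Q x = 0 then ((klDivR Q P : ℝ) : EReal) else ⊤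

/-- The mixture `(α P1 + P2) / (1 + α)`. -/
noncomputable def mix (P1 P2 : X → ℝ) (α : ℝ) : X → ℝ :=
  fun x => (α * P1 x + P2 x) / (1 + α)

/-- Generalized Jensen–Shannon divergence
`GJS(P1,P2,α) = α D(P1 ‖ (αP1+P2)/(1+α)) + D(P2 ‖ (αP1+P2)/(1+α))`. -/
noncomputable def GJS (P1 P2 : X → ℝ) (α : ℝ) : ℝ :=
  α * klDivR P1 (mix P1 P2 α) + klDivR P2 (mix P1 P2 α)

/-- Training sequence length `N = ⌈α n⌉`. -/
noncomputable def trainLen (α : ℝ) (n : ℕ) : ℕ := ⌈α * (n : ℝ)⌉₊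

/-- Probability of observing the sequence `x` under i.i.d. sampling from `P`. -/
noncomputable def seqProb (P : X → ℝ) {m : ℕ} (x : Fin m → X) : ℝ := ∏ i, P (x i)

/-- A binary classification test: output `true` means "declare H₂",
`false` means "declare H₁". -/
abbrev BTest (X : Type*) (α : ℝ) (n : ℕ) : Type _ :=
  (Fin (trainLen α n) → X) → (Fin (trainLen α n) → X) → (Fin n → X) → Bool

/-- Type-I error probability: probability of declaring `H₂` when `Y^n ~ P1` (hypothesis H₁). -/
noncomputable def beta1 {α : ℝ} {n : ℕ} (φ : BTest X α n) (P1 P2 : X → ℝ) : ℝ :=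
  ∑ x1 : Fin (trainLen α n) → X, ∑ x2 : Fin (trainLen α n) → X, ∑ y : Fin n → X,
    if φ x1 x2 y = true then seqProb P1 x1 * seqProb P2 x2 * seqProb P1 y else 0

/-- Type-II error probability: probability of declaring `H₁` when `Y^n ~ P2` (hypothesis H₂). -/
noncomputable def beta2 {α : ℝ} {n : ℕ} (φ : BTest X α n) (P1 P2 : X → ℝ) : ℝ :=
  ∑ x1 : Fin (trainLen α n) → X, ∑ x2 : Fin (trainLen α n) → X, ∑ y : Fin n → X,
    if φ x1 x2 y = false then seqProb P1 x1 * seqProb P2 x2 * seqProb P2 y else 0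

open Classical in
/-- Gutman's test with threshold `lam`: declare `H₁` iff `GJS(T̂_{x₁}, T̂_y, α) ≤ lam`. -/
noncomputable def gutman (α lam : ℝ) (n : ℕ) : BTest X α n :=
  fun x1 _ y => if GJS (empDist x1) (empDist y) α ≤ lam then false else true

open Classical in
/-- `- log x` as an extended real, with `⊤` at `x = 0`. -/
noncomputable def negLogE (x : ℝ) : EReal :=
  if x = 0 then ⊤ else ((-Real.log x : ℝ) : EReal)

/-- Gutman's exponent function
`F(P1,P2,α,lam) = min { α D(Q1‖P1) + D(Q2‖P2) : GJS(Q1,Q2,α) ≤ lam }` (as an inf in `EReal`). -/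
noncomputable def Fexp (P1 P2 : X → ℝ) (α lam : ℝ) : EReal :=
  sInf {v : EReal | ∃ Q1 Q2 : X → ℝ, IsDist Q1 ∧ IsDist Q2 ∧ GJS Q1 Q2 α ≤ lam ∧
    v = (α : EReal) * klDivE Q1 P1 + klDivE Q2 P2}

/-- Expectation of `f` under `P`. -/
noncomputable def expect (P : X → ℝ) (f : X → ℝ) : ℝ := ∑ x, P x * f x

/-- Variance of `f` under `P`. -/
noncomputable def varD (P : X → ℝ) (f : X → ℝ) : ℝ :=
  expect P (fun x => (f x - expect P f) ^ 2)

/-- Information density `ı₁(x) = log((1+α) P1(x) / (α P1(x) + P2(x)))`. -/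
noncomputable def iDens1 (P1 P2 : X → ℝ) (α : ℝ) (x : X) : ℝ :=
  Real.log ((1 + α) * P1 x / (α * P1 x + P2 x))

/-- Information density `ı₂(x) = log((1+α) P2(x) / (α P1(x) + P2(x)))`. -/
noncomputable def iDens2 (P1 P2 : X → ℝ) (α : ℝ) (x : X) : ℝ :=
  Real.log ((1 + α) * P2 x / (α * P1 x + P2 x))

/-- The dispersion `V(P1,P2,α) = α Var_{P1}[ı₁] + Var_{P2}[ı₂]`. -/
noncomputable def disp (P1 P2 : X → ℝ) (α : ℝ) : ℝ :=
  α * varD P1 (iDens1 P1 P2 α) + varD P2 (iDens2 P1 P2 α)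

/-- The standard Gaussian cumulative distribution function `Φ`. -/
noncomputable def stdCDF (x : ℝ) : ℝ :=
  (Real.sqrt (2 * Real.pi))⁻¹ * ∫ t in Set.Iic x, Real.exp (-t ^ 2 / 2)

/-- The inverse standard Gaussian cdf `Φ⁻¹`. -/
noncomputable def stdCDFInv (p : ℝ) : ℝ := sInf {x : ℝ | p ≤ stdCDF x}

/-- The non-asymptotic fundamental limit `λ*(n, α, ε | P1, P2)` for binary classification. -/
noncomputable def lamStar (α : ℝ) (n : ℕ) (ε : ℝ) (P1 P2 : X → ℝ) : ℝ :=
  sSup {lam : ℝ | 0 ≤ lam ∧ ∃ φ : BTest X α n,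
    (∀ Q1 Q2 : X → ℝ, IsDist Q1 → IsDist Q2 →
      beta1 φ Q1 Q2 ≤ Real.exp (-((n : ℝ) * lam))) ∧
    beta2 φ P1 P2 ≤ ε}

/-- Rényi divergence of order `γ`. -/
noncomputable def renyi (γ : ℝ) (P1 P2 : X → ℝ) : ℝ :=
  (1 / (γ - 1)) * Real.log (∑ x, P1 x ^ γ * P2 x ^ (1 - γ))

/-- The fundamental limit `τ*(n, α, ε | φ_n^Gut, P1, P2)` in the dual setting for Gutman's test. -/
noncomputable def tauStarGut (α : ℝ) (n : ℕ) (ε : ℝ) (P1 P2 : X → ℝ) : ℝ :=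
  sSup {τ : ℝ | 0 ≤ τ ∧ ∃ lam : ℝ, 0 ≤ lam ∧
    (∀ Q1 Q2 : X → ℝ, IsDist Q1 → IsDist Q2 →
      beta1 (gutman α lam n) Q1 Q2 ≤ ε) ∧
    beta2 (gutman α lam n) P1 P2 ≤ Real.exp (-((n : ℝ) * τ))}

/-- A two-sample homogeneity test: `true` means "declare H₂" (different distributions). -/
abbrev TTest (X : Type*) (α : ℝ) (n : ℕ) : Type _ :=
  (Fin (trainLen α n) → X) → (Fin n → X) → Bool

/-- False-alarm probability of a two-sample test. -/
noncomputable def betaFA {α : ℝ} {n : ℕ} (φ : TTest X α n) (P1 : X → ℝ) : ℝ :=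
  ∑ x : Fin (trainLen α n) → X, ∑ y : Fin n → X,
    if φ x y = true then seqProb P1 x * seqProb P1 y else 0

/-- Miss-detection probability of a two-sample test. -/
noncomputable def betaMD {α : ℝ} {n : ℕ} (φ : TTest X α n) (P1 P2 : X → ℝ) : ℝ :=
  ∑ x : Fin (trainLen α n) → X, ∑ y : Fin n → X,
    if φ x y = false then seqProb P1 x * seqProb P2 y else 0

/-- The fundamental limit `ξ*(n, α, ε | P1, P2)` for two-sample homogeneity testing. -/
noncomputable def xiStar (α : ℝ) (n : ℕ) (ε : ℝ) (P1 P2 : X → ℝ) : ℝ :=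
  sSup {lam : ℝ | 0 ≤ lam ∧ ∃ φ : TTest X α n,
    (∀ Q1 : X → ℝ, IsDist Q1 → betaFA φ Q1 ≤ Real.exp (-((n : ℝ) * lam))) ∧
    betaMD φ P1 P2 ≤ ε}

/-- An M-ary classification test with the rejection option: `some j` means "declare H_j",
`none` means "reject". -/
abbrev MTest (X : Type*) (M : ℕ) (α : ℝ) (n : ℕ) : Type _ :=
  (Fin M → Fin (trainLen α n) → X) → (Fin n → X) → Option (Fin M)

/-- Type-`j` error probability: probability of declaring some hypothesis other than
`H_j` or rejection, under `H_j`. -/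
noncomputable def betaM {M : ℕ} {α : ℝ} {n : ℕ} (ψ : MTest X M α n)
    (P : Fin M → X → ℝ) (j : Fin M) : ℝ :=
  ∑ xs : Fin M → Fin (trainLen α n) → X, ∑ y : Fin n → X,
    if ψ xs y ≠ some j ∧ ψ xs y ≠ none then
      (∏ i, seqProb (P i) (xs i)) * seqProb (P j) y else 0

/-- Type-`j` rejection probability: probability of rejecting under `H_j`. -/
noncomputable def zetaM {M : ℕ} {α : ℝ} {n : ℕ} (ψ : MTest X M α n)
    (P : Fin M → X → ℝ) (j : Fin M) : ℝ :=
  ∑ xs : Fin M → Fin (trainLen α n) → X, ∑ y : Fin n → X,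
    if ψ xs y = none then (∏ i, seqProb (P i) (xs i)) * seqProb (P j) y else 0

/-- The fundamental limit `λ*(n, α, ε | P)` for M-ary classification with rejection. -/
noncomputable def lamStarM (M : ℕ) (α : ℝ) (n : ℕ) (ε : Fin M → ℝ)
    (P : Fin M → X → ℝ) : ℝ :=
  sSup {lam : ℝ | 0 ≤ lam ∧ ∃ ψ : MTest X M α n,
    (∀ Q : Fin M → X → ℝ, (∀ i, IsDist (Q i)) → ∀ j,
      betaM ψ Q j ≤ Real.exp (-((n : ℝ) * lam))) ∧
    (∀ j, zetaM ψ P j ≤ ε j)}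

open Classical in
/-- Gutman's M-ary test with rejection and threshold `lam`. -/
noncomputable def gutmanM (M : ℕ) [NeZero M] (α lam : ℝ) (n : ℕ) : MTest X M α n :=
  fun xs y =>
    if ∃ i k : Fin M, i ≠ k ∧ GJS (empDist (xs i)) (empDist y) α ≤ lam ∧
        GJS (empDist (xs k)) (empDist y) α ≤ lam then none
    else if h : ∃ j : Fin M, GJS (empDist (xs j)) (empDist y) α ≤ lam then some h.choose
    else some 0

/-- The fundamental limit `τ*(n, α, ε | Ψ_n^Gut, P)` in the dual setting for
Gutman's M-ary test. -/
noncomputable def tauStarGutM (M : ℕ) [NeZero M] (α : ℝ) (n : ℕ) (ε : ℝ)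
    (P : Fin M → X → ℝ) : ℝ :=
  sSup {τ : ℝ | 0 ≤ τ ∧ ∃ lam : ℝ, 0 ≤ lam ∧
    (∀ Q : Fin M → X → ℝ, (∀ i, IsDist (Q i)) → ∀ j,
      betaM (gutmanM M α lam n) Q j ≤ ε) ∧
    (∀ j, zetaM (gutmanM M α lam n) P j ≤ Real.exp (-((n : ℝ) * τ)))}

/-- Generalized divergence of three distributions
`D_γ(P1,P2,P3) = (γ-1)⁻¹ log Σ_x P1(x)^{1-γ} P2(x)^{γ/2} P3(x)^{γ/2}`. -/
noncomputable def genDiv (γ : ℝ) (P1 P2 P3 : X → ℝ) : ℝ :=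
  (1 / (γ - 1)) * Real.log (∑ x, P1 x ^ (1 - γ) * P2 x ^ (γ / 2) * P3 x ^ (γ / 2))

/-- A binary classification test with the rejection option: `some 0` means "declare H₁",
`some 1` means "declare H₂", `none` means "reject". -/
abbrev RTest (X : Type*) (α : ℝ) (n : ℕ) : Type _ :=
  (Fin (trainLen α n) → X) → (Fin (trainLen α n) → X) → (Fin n → X) → Option (Fin 2)

/-- Type-1 error probability of a rejection test: declare `H₂` under `H₁`. -/
noncomputable def beta1R {α : ℝ} {n : ℕ} (ψ : RTest X α n) (P1 P2 : X → ℝ) : ℝ :=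
  ∑ x1 : Fin (trainLen α n) → X, ∑ x2 : Fin (trainLen α n) → X, ∑ y : Fin n → X,
    if ψ x1 x2 y = some 1 then seqProb P1 x1 * seqProb P2 x2 * seqProb P1 y else 0

/-- Type-2 error probability of a rejection test: declare `H₁` under `H₂`. -/
noncomputable def beta2R {α : ℝ} {n : ℕ} (ψ : RTest X α n) (P1 P2 : X → ℝ) : ℝ :=
  ∑ x1 : Fin (trainLen α n) → X, ∑ x2 : Fin (trainLen α n) → X, ∑ y : Fin n → X,
    if ψ x1 x2 y = some 0 then seqProb P1 x1 * seqProb P2 x2 * seqProb P2 y else 0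

open Classical in
/-- Type-`j` rejection probability of a binary rejection test. -/
noncomputable def zetaR {α : ℝ} {n : ℕ} (ψ : RTest X α n) (P1 P2 : X → ℝ) (j : Fin 2) : ℝ :=
  ∑ x1 : Fin (trainLen α n) → X, ∑ x2 : Fin (trainLen α n) → X, ∑ y : Fin n → X,
    if ψ x1 x2 y = none then
      seqProb P1 x1 * seqProb P2 x2 * seqProb (if j = 0 then P1 else P2) y else 0

/-- A binary test is type-based if it depends on the data only through the
triple of empirical distributions. -/
def TypeBasedB {α : ℝ} {n : ℕ} (φ : BTest X α n) : Prop :=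
  ∀ x1 x1' x2 x2' : Fin (trainLen α n) → X, ∀ y y' : Fin n → X,
    empDist x1 = empDist x1' → empDist x2 = empDist x2' → empDist y = empDist y' →
      φ x1 x2 y = φ x1' x2' y'

/-- An M-ary test is type-based if it depends on the data only through the
tuple of empirical distributions. -/
def TypeBasedM {M : ℕ} {α : ℝ} {n : ℕ} (ψ : MTest X M α n) : Prop :=
  ∀ xs xs' : Fin M → Fin (trainLen α n) → X, ∀ y y' : Fin n → X,
    (∀ i, empDist (xs i) = empDist (xs' i)) → empDist y = empDist y' →
      ψ xs y = ψ xs' y'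

open Classical in
/-- Probability of an event under hypothesis `H₂` in the binary setup. -/
noncomputable def prH2E (α : ℝ) (n : ℕ) (P1 P2 : X → ℝ)
    (E : (Fin (trainLen α n) → X) → (Fin (trainLen α n) → X) → (Fin n → X) → Prop) : ℝ :=
  ∑ x1 : Fin (trainLen α n) → X, ∑ x2 : Fin (trainLen α n) → X, ∑ y : Fin n → X,
    if E x1 x2 y then seqProb P1 x1 * seqProb P2 x2 * seqProb P2 y else 0

open Classical in
/-- Probability of an event under hypothesis `H_j` in the M-ary setup. -/
noncomputable def prHjM (M : ℕ) (α : ℝ) (n : ℕ) (P : Fin M → X → ℝ) (j : Fin M)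
    (E : (Fin M → Fin (trainLen α n) → X) → (Fin n → X) → Prop) : ℝ :=
  ∑ xs : Fin M → Fin (trainLen α n) → X, ∑ y : Fin n → X,
    if E xs y then (∏ i, seqProb (P i) (xs i)) * seqProb (P j) y else 0

/-- `η_n(α) = |X| log(n+1)/n + 2|X| log(1+αn)/(αn)`. -/
noncomputable def etaN (X : Type*) [Fintype X] (α : ℝ) (n : ℕ) : ℝ :=
  (Fintype.card X : ℝ) * Real.log ((n : ℝ) + 1) / n +
    2 * (Fintype.card X : ℝ) * Real.log (1 + α * n) / (α * n)

/-- `η_{n,M} = M |X| log(nα+1)/(nα) + |X| log(n+1)/n`. -/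
noncomputable def etaNM (X : Type*) [Fintype X] (M : ℕ) (α : ℝ) (n : ℕ) : ℝ :=
  (M : ℝ) * (Fintype.card X : ℝ) * Real.log ((n : ℝ) * α + 1) / ((n : ℝ) * α) +
    (Fintype.card X : ℝ) * Real.log ((n : ℝ) + 1) / n

/-- `Q` is an `m`-type: the empirical distribution of some sequence of length `m`. -/
def IsTypeDist (m : ℕ) (Q : X → ℝ) : Prop := ∃ x : Fin m → X, empDist x = Q

/-- The type-restricted exponent function `F_n`. -/
noncomputable def Fn (n : ℕ) (P1 P2 : X → ℝ) (α lam : ℝ) : ℝ :=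
  sInf {v : ℝ | ∃ Q1 Q2 : X → ℝ, IsTypeDist (trainLen α n) Q1 ∧ IsTypeDist n Q2 ∧
    GJS Q1 Q2 α ≤ lam ∧ v = α * klDivR Q1 P1 + klDivR Q2 P2}

/-- The second smallest value of a finite family of reals:
`min_{i ≠ j} max (v i) (v j)`. -/
noncomputable def secondMin {M : ℕ} (v : Fin M → ℝ) : ℝ :=
  sInf {t : ℝ | ∃ i j : Fin M, i ≠ j ∧ t = max (v i) (v j)}

/-- The tilted distribution `P^{(γ)}` with `γ = α/(1+α)`. -/
noncomputable def tilt (α : ℝ) (P1 P2 : X → ℝ) : X → ℝ :=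
  fun x => P1 x ^ (α / (1 + α)) * P2 x ^ (1 / (1 + α)) /
    ∑ a, P1 a ^ (α / (1 + α)) * P2 a ^ (1 / (1 + α))



/-! ### Auxiliary development for the Gutman bound -/

section GutmanAux

open Finset

/-- number of occurrences of `a` in the sequence `w` -/
def cnt {m : ℕ} (w : Fin m → X) (a : X) : ℕ := (Finset.univ.filter fun i => w i = a).card

lemma sum_cnt {m : ℕ} (w : Fin m → X) : ∑ a, cnt w a = m := by
  classical
  have := Finset.card_eq_sum_card_fiberwise
    (s := (Finset.univ : Finset (Fin m))) (f := w) (t := Finset.univ)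
    (fun i _ => Finset.mem_univ (w i))
  simpa [cnt, Finset.card_univ] using this.symm

lemma prod_comp_cnt {R : Type*} [CommMonoid R] {m : ℕ} (w : Fin m → X) (g : X → R) :
    ∏ i, g (w i) = ∏ a, g a ^ cnt w a := by
  classical
  rw [← Finset.prod_fiberwise_of_maps_to (g := w) (t := Finset.univ)
    (fun i _ => Finset.mem_univ (w i)) (fun i => g (w i))]
  refine Finset.prod_congr rfl fun a _ => ?_
  rw [cnt, ← Finset.prod_const]
  exact Finset.prod_congr rfl fun i hi => by rw [(Finset.mem_filter.1 hi).2]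

/-- number of sequences of length `m` with count vector `k` -/
def cardClass (X : Type*) [Fintype X] [DecidableEq X] (m : ℕ) (k : X → ℕ) : ℕ :=
  (Finset.univ.filter fun w : Fin m → X => cnt w = k).card

lemma sum_seq_prod {R : Type*} [CommSemiring R] (m : ℕ) (g : X → R) :
    ∑ w : Fin m → X, ∏ i, g (w i) = (∑ a, g a) ^ m := by
  rw [Finset.sum_pow' Finset.univ g m, ← Fintype.piFinset_univ]

lemma sum_cardClass {R : Type*} [CommSemiring R] (m : ℕ) (g : X → R) :
    ∑ k ∈ Finset.univ.piAntidiag m, (cardClass X m k : R) * ∏ a, g a ^ k a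
      = (∑ a, g a) ^ m := by
  rw [← sum_seq_prod m g]
  rw [← Finset.sum_fiberwise_of_maps_to (g := fun w : Fin m → X => cnt w)
    (t := Finset.univ.piAntidiag m)
    (fun w _ => by simp [Finset.mem_piAntidiag, sum_cnt w]) (fun w => ∏ i, g (w i))]
  refine Finset.sum_congr rfl fun k _ => ?_
  have : ∀ w ∈ Finset.univ.filter fun w : Fin m → X => cnt w = k,
      (∏ i, g (w i)) = ∏ a, g a ^ k a := fun w hw => by
    rw [prod_comp_cnt w g, (Finset.mem_filter.1 hw).2]
  rw [Finset.sum_congr rfl this, Finset.sum_const, cardClass, nsmul_eq_mul]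

lemma prod_X_pow_eq_monomial' {k : X → ℕ} :
    (∏ a, (MvPolynomial.X a : MvPolynomial X ℚ) ^ k a)
      = MvPolynomial.monomial (Finsupp.equivFunOnFinite.symm k) 1 := by
  classical
  set d : X →₀ ℕ := Finsupp.equivFunOnFinite.symm k with hd
  have hco : ∀ a, d a = k a := fun a => rfl
  rw [← MvPolynomial.prod_X_pow_eq_monomial (s := d)]
  refine (Finset.prod_subset (Finset.subset_univ d.support) fun a _ ha => ?_).symm.trans
    (Finset.prod_congr rfl fun a _ => by rw [hco])
  have : d a = 0 := Finsupp.notMem_support_iff.1 ha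
  rw [hco] at this; rw [this, pow_zero]

lemma cardClass_eq {m : ℕ} {k : X → ℕ} (hk : ∑ a, k a = m) :
    cardClass X m k = Nat.multinomial Finset.univ k := by
  classical
  have h1 := sum_cardClass (X := X) (R := MvPolynomial X ℚ) m (fun a => MvPolynomial.X a)
  have h2 := Finset.sum_pow_eq_sum_piAntidiag (Finset.univ : Finset X)
    (fun a => (MvPolynomial.X a : MvPolynomial X ℚ)) m
  have h3 : ∑ k' ∈ Finset.univ.piAntidiag m,
      (cardClass X m k' : MvPolynomial X ℚ) * ∏ a, MvPolynomial.X a ^ k' a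
      = ∑ k' ∈ Finset.univ.piAntidiag m,
      (Nat.multinomial Finset.univ k' : MvPolynomial X ℚ) * ∏ a, MvPolynomial.X a ^ k' a := by
    rw [h1, h2]
  have key : ∀ c : ℕ, ∀ k' : X → ℕ,
      MvPolynomial.coeff (Finsupp.equivFunOnFinite.symm k)
        ((c : MvPolynomial X ℚ) * ∏ a, MvPolynomial.X a ^ k' a)
      = if k' = k then (c : ℚ) else 0 := by
    intro c k'
    rw [prod_X_pow_eq_monomial', ← MvPolynomial.C_eq_coe_nat, MvPolynomial.C_mul_monomial,
      mul_one, MvPolynomial.coeff_monomial]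
    congr 1
    simp only [eq_iff_iff, EmbeddingLike.apply_eq_iff_eq]
  have hmem : k ∈ Finset.univ.piAntidiag m := by
    simp [Finset.mem_piAntidiag, hk]
  have hcoeff := congrArg (MvPolynomial.coeff (Finsupp.equivFunOnFinite.symm k)) h3
  rw [MvPolynomial.coeff_sum, MvPolynomial.coeff_sum] at hcoeff
  simp only [key] at hcoeff
  rw [Finset.sum_ite_eq' _ k, Finset.sum_ite_eq' _ k, if_pos hmem, if_pos hmem] at hcoeff
  exact_mod_cast hcoeff

/-- term of the binomial expansion -/
def bterm (N n j : ℕ) : ℕ := (N + n).choose j * N ^ j * n ^ (N + n - j)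

lemma bterm_step_up (N n : ℕ) (hn : 0 < n) {j : ℕ} (hj : j < N) :
    bterm N n j ≤ bterm N n (j + 1) := by
  have hc : (N + n).choose (j + 1) * (j + 1) = (N + n).choose j * (N + n - j) :=
    Nat.choose_succ_right_eq _ _
  have hjm : j < N + n := by omega
  have hexp : N + n - j = (N + n - (j + 1)) + 1 := by omega
  refine Nat.le_of_mul_le_mul_right ?_ (show 0 < (j + 1) * n by positivity)
  have lhs : bterm N n j * ((j + 1) * n) =
      (N + n).choose j * N ^ j * n ^ (N + n - (j+1)) * (n * ((j + 1) * n)) := by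
    rw [bterm, hexp]; ring
  have rhs : bterm N n (j + 1) * ((j + 1) * n) =
      (N + n).choose j * N ^ j * n ^ (N + n - (j+1)) * (n * ((N + n - j) * N)) := by
    rw [bterm]
    calc (N + n).choose (j+1) * N ^ (j+1) * n ^ (N + n - (j+1)) * ((j + 1) * n)
        = ((N + n).choose (j+1) * (j+1)) * (N ^ (j+1) * n ^ (N + n - (j+1)) * n) := by ring
      _ = ((N + n).choose j * (N + n - j)) * (N ^ (j+1) * n ^ (N + n - (j+1)) * n) := by rw [hc]
      _ = (N + n).choose j * N ^ j * n ^ (N + n - (j+1)) * (n * ((N + n - j) * N)) := by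
          rw [pow_succ]; ring
  rw [lhs, rhs]
  have : (j + 1) * n ≤ (N + n - j) * N := by
    calc (j + 1) * n ≤ N * n := Nat.mul_le_mul_right _ (by omega)
      _ ≤ (n + 1) * N := by rw [Nat.mul_comm]; exact Nat.mul_le_mul_right _ (by omega)
      _ ≤ (N + n - j) * N := Nat.mul_le_mul_right _ (by omega)
  exact Nat.mul_le_mul_left _ (Nat.mul_le_mul_left _ this)

lemma bterm_step_down (N n : ℕ) {j : ℕ} (hj : N ≤ j) :
    bterm N n (j + 1) ≤ bterm N n j := by
  rcases Nat.lt_or_ge j (N + n) with hjm | hjm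
  · have hc : (N + n).choose (j + 1) * (j + 1) = (N + n).choose j * (N + n - j) :=
      Nat.choose_succ_right_eq _ _
    have hexp : N + n - j = (N + n - (j + 1)) + 1 := by omega
    refine Nat.le_of_mul_le_mul_right ?_ (show 0 < j + 1 by omega)
    have lhs : bterm N n (j + 1) * (j + 1) =
        (N + n).choose j * N ^ j * n ^ (N + n - (j+1)) * ((N + n - j) * N) := by
      rw [bterm]
      calc (N + n).choose (j+1) * N ^ (j+1) * n ^ (N + n - (j+1)) * (j + 1)
          = ((N + n).choose (j+1) * (j+1)) * (N ^ (j+1) * n ^ (N + n - (j+1))) := by ring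
        _ = ((N + n).choose j * (N + n - j)) * (N ^ (j+1) * n ^ (N + n - (j+1))) := by rw [hc]
        _ = (N + n).choose j * N ^ j * n ^ (N + n - (j+1)) * ((N + n - j) * N) := by
            rw [pow_succ]; ring
    have rhs : bterm N n j * (j + 1) =
        (N + n).choose j * N ^ j * n ^ (N + n - (j+1)) * (n * (j + 1)) := by
      rw [bterm, hexp]; ring
    rw [lhs, rhs]
    have : (N + n - j) * N ≤ n * (j + 1) := by
      calc (N + n - j) * N ≤ n * N := Nat.mul_le_mul_right _ (by omega)
        _ ≤ n * (j + 1) := Nat.mul_le_mul_left _ (by omega)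
    exact Nat.mul_le_mul_left _ this
  · have : (N + n).choose (j + 1) = 0 := Nat.choose_eq_zero_of_lt (by omega)
    simp [bterm, this]

lemma bterm_le_max (N n : ℕ) (hn : 0 < n) (j : ℕ) :
    bterm N n j ≤ bterm N n N := by
  rcases Nat.le_total j N with hj | hj
  · have key : ∀ d, bterm N n (N - d) ≤ bterm N n N := by
      intro d
      induction d with
      | zero => simp
      | succ d ih =>
        rcases Nat.lt_or_ge d N with hd | hd
        · have h2 : bterm N n (N - (d+1)) ≤ bterm N n (N - (d+1) + 1) :=
            bterm_step_up N n hn (by omega)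
          rw [show N - (d+1) + 1 = N - d from by omega] at h2
          exact h2.trans ih
        · rw [show N - (d + 1) = N - d from by omega]; exact ih
    have := key (N - j); rwa [Nat.sub_sub_self hj] at this
  · have key : ∀ d, bterm N n (N + d) ≤ bterm N n N := by
      intro d
      induction d with
      | zero => simp
      | succ d ih =>
        have h2 : bterm N n (N + d + 1) ≤ bterm N n (N + d) :=
          bterm_step_down N n (by omega)
        rw [show N + (d + 1) = N + d + 1 from by omega]
        exact h2.trans ih
    have := key (j - N); rwa [Nat.add_sub_cancel' hj] at this

lemma pow_add_le (N n : ℕ) (hn : 0 < n) :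
    (N + n) ^ (N + n) ≤ (N + n + 1) * ((N + n).choose N * N ^ N * n ^ n) := by
  have expand : (N + n) ^ (N + n) = ∑ j ∈ Finset.range (N + n + 1), bterm N n j := by
    rw [add_pow]
    refine Finset.sum_congr rfl fun j hj => ?_
    rw [bterm]; push_cast; ring
  rw [expand]
  have : ∀ j ∈ Finset.range (N + n + 1), bterm N n j ≤ (N + n).choose N * N ^ N * n ^ n := by
    intro j _
    calc bterm N n j ≤ bterm N n N := bterm_le_max N n hn j
      _ = (N + n).choose N * N ^ N * n ^ n := by rw [bterm, Nat.add_sub_cancel_left]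
  calc ∑ j ∈ Finset.range (N + n + 1), bterm N n j
      ≤ (Finset.range (N + n + 1)).card * ((N + n).choose N * N ^ N * n ^ n) :=
        Finset.sum_le_card_nsmul _ _ _ this
    _ = (N + n + 1) * ((N + n).choose N * N ^ N * n ^ n) := by
        rw [Finset.card_range]

lemma choose_term_le (k l : ℕ) : (k + l).choose k * k ^ k * l ^ l ≤ (k + l) ^ (k + l) := by
  have expand : (k + l) ^ (k + l) = ∑ j ∈ Finset.range (k + l + 1), bterm k l j := by
    rw [add_pow]
    refine Finset.sum_congr rfl fun j hj => ?_
    rw [bterm]; push_cast; ring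
  rw [expand]
  have hmem : k ∈ Finset.range (k + l + 1) := by simp
  have : bterm k l k = (k + l).choose k * k ^ k * l ^ l := by
    rw [bterm, Nat.add_sub_cancel_left]
  rw [← this]
  exact Finset.single_le_sum (fun j _ => Nat.zero_le _) hmem

lemma multinomial_split (N n : ℕ) (k l : X → ℕ) (hk : ∑ a, k a = N) (hl : ∑ a, l a = n) :
    Nat.multinomial Finset.univ k * Nat.multinomial Finset.univ l * (N + n).choose N
      = Nat.multinomial Finset.univ (fun a => k a + l a) * ∏ a, (k a + l a).choose (k a) := by
  have hpos : 0 < (∏ a, (k a).factorial) * (∏ a, (l a).factorial) := by positivity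
  apply Nat.eq_of_mul_eq_mul_left hpos
  have e1 : ((∏ a, (k a).factorial) * (∏ a, (l a).factorial)) *
      (Nat.multinomial Finset.univ k * Nat.multinomial Finset.univ l * (N + n).choose N)
      = (((∏ a, (k a).factorial) * Nat.multinomial Finset.univ k) *
         ((∏ a, (l a).factorial) * Nat.multinomial Finset.univ l)) * (N + n).choose N := by ring
  have e2 : ((∏ a, (k a).factorial) * (∏ a, (l a).factorial)) *
      (Nat.multinomial Finset.univ (fun a => k a + l a) * ∏ a, (k a + l a).choose (k a))
      = (∏ a, ((k a + l a).choose (k a) * (k a).factorial * (l a).factorial)) *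
        Nat.multinomial Finset.univ (fun a => k a + l a) := by
    rw [Finset.prod_congr rfl fun a _ => show (k a + l a).choose (k a) * (k a).factorial
        * (l a).factorial = (k a).factorial * ((l a).factorial * (k a + l a).choose (k a))
        from by ring, Finset.prod_mul_distrib, Finset.prod_mul_distrib]
    ring
  have e3 : (∏ a, ((k a + l a).choose (k a) * (k a).factorial * (l a).factorial))
      = ∏ a, (k a + l a).factorial := Finset.prod_congr rfl fun a _ => by
    have h := Nat.choose_mul_factorial_mul_factorial (show k a ≤ k a + l a by omega)
    rwa [show k a + l a - k a = l a from by omega] at h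
  have hsum : ∑ a, (k a + l a) = N + n := by rw [Finset.sum_add_distrib, hk, hl]
  have hmn : (N + n).choose N * N.factorial * n.factorial = (N + n).factorial := by
    have h := Nat.choose_mul_factorial_mul_factorial (show N ≤ N + n by omega)
    rwa [show N + n - N = n from by omega] at h
  rw [e1, e2, e3, Nat.multinomial_spec, Nat.multinomial_spec, hk, hl,
    Nat.multinomial_spec, hsum, ← hmn]
  ring

lemma klDivR_nonneg' (P Q : X → ℝ) (hP : ∀ x, 0 ≤ P x)
    (hPs : ∑ x, P x = 1) (hQs : ∑ x, Q x = 1) (habs : ∀ x, Q x = 0 → 0 ≤ P x → P x = 0)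
    (hQ : ∀ x, 0 ≤ Q x) : 0 ≤ klDivR P Q := by
  have key : ∀ x, P x - Q x ≤ P x * Real.log (P x / Q x) := by
    intro x
    rcases eq_or_lt_of_le (hP x) with h | h
    · rw [← h]; simp [← h]; exact hQ x
    · have hQx : 0 < Q x := by
        rcases eq_or_lt_of_le (hQ x) with h2 | h2
        · exact absurd (habs x h2.symm (hP x)) (ne_of_gt h)
        · exact h2
      have hlog : Real.log (Q x / P x) ≤ Q x / P x - 1 :=
        Real.log_le_sub_one_of_pos (by positivity)
      have hrw : Real.log (P x / Q x) = - Real.log (Q x / P x) := by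
        rw [← Real.log_inv, inv_div]
      rw [hrw]
      have := mul_le_mul_of_nonneg_left hlog (le_of_lt h)
      have h2 : P x * (Q x / P x - 1) = Q x - P x := by field_simp
      nlinarith
  calc (0:ℝ) = ∑ x, (P x - Q x) := by rw [Finset.sum_sub_distrib, hPs, hQs]; ring
    _ ≤ ∑ x, P x * Real.log (P x / Q x) := Finset.sum_le_sum fun x _ => key x
    _ = klDivR P Q := rfl

lemma gjs_le_beta (T1 T2 : X → ℝ) (h1 : ∀ x, 0 ≤ T1 x) (h2 : ∀ x, 0 ≤ T2 x)
    (h1s : ∑ x, T1 x = 1) (h2s : ∑ x, T2 x = 1) {α β : ℝ} (hα : 0 < α) (hβ : α ≤ β) :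
    GJS T1 T2 α ≤ β * klDivR T1 (mix T1 T2 β) + klDivR T2 (mix T1 T2 β) := by
  have hβ0 : 0 < β := lt_of_lt_of_le hα hβ
  set Vα := mix T1 T2 α with hVα
  set R := mix T1 T2 β with hR
  have hVα0 : ∀ x, 0 ≤ Vα x := fun x =>
    div_nonneg (by nlinarith [h1 x, h2 x, hα.le]) (by nlinarith [hα.le])
  have hR0 : ∀ x, 0 ≤ R x := fun x =>
    div_nonneg (by nlinarith [h1 x, h2 x, hβ0.le]) (by nlinarith [hβ0.le])
  have hmixsum : ∀ γ : ℝ, 0 < γ → ∑ x, mix T1 T2 γ x = 1 := by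
    intro γ hγ
    simp only [mix]
    rw [← Finset.sum_div, Finset.sum_add_distrib, ← Finset.mul_sum, h1s, h2s]
    field_simp
    ring
  have hRabs : ∀ x, R x = 0 → T1 x = 0 ∧ T2 x = 0 := by
    intro x hx
    rw [hR, mix, div_eq_zero_iff] at hx
    rcases hx with hx | hx
    · constructor
      · nlinarith [h1 x, h2 x]
      · nlinarith [h1 x, h2 x]
    · nlinarith
  have point : ∀ x, α * (T1 x * Real.log (T1 x / Vα x)) + T2 x * Real.log (T2 x / Vα x)
      + (1 + α) * (Vα x * Real.log (Vα x / R x))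
      = α * (T1 x * Real.log (T1 x / R x)) + T2 x * Real.log (T2 x / R x) := by
    intro x
    by_cases hz : T1 x = 0 ∧ T2 x = 0
    · have hV : Vα x = 0 := by rw [hVα, mix, hz.1, hz.2]; simp
      rw [hz.1, hz.2, hV]; simp
    · have hpos : 0 < α * T1 x + T2 x := by
        rcases (not_and_or.1 hz) with h | h
        · have : 0 < T1 x := lt_of_le_of_ne (h1 x) (Ne.symm h)
          nlinarith [h2 x]
        · have : 0 < T2 x := lt_of_le_of_ne (h2 x) (Ne.symm h)
          nlinarith [h1 x, hα.le]
      have hposβ : 0 < β * T1 x + T2 x := by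
        rcases (not_and_or.1 hz) with h | h
        · have : 0 < T1 x := lt_of_le_of_ne (h1 x) (Ne.symm h)
          nlinarith [h2 x]
        · have : 0 < T2 x := lt_of_le_of_ne (h2 x) (Ne.symm h)
          nlinarith [h1 x, hβ0.le]
      have hV : 0 < Vα x := div_pos hpos (by nlinarith [hα.le])
      have hRx : 0 < R x := div_pos hposβ (by nlinarith [hβ0.le])
      have hT1 : T1 x * Real.log (T1 x / Vα x)
          = T1 x * Real.log (T1 x / R x) + T1 x * Real.log (R x / Vα x) := by
        rcases eq_or_lt_of_le (h1 x) with h | h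
        · rw [← h]; ring
        · rw [← mul_add, ← Real.log_mul (by positivity) (by positivity)]
          rw [div_mul_div_comm, mul_comm (T1 x) (R x), mul_div_mul_left _ _ (ne_of_gt hRx)]
      have hT2 : T2 x * Real.log (T2 x / Vα x)
          = T2 x * Real.log (T2 x / R x) + T2 x * Real.log (R x / Vα x) := by
        rcases eq_or_lt_of_le (h2 x) with h | h
        · rw [← h]; ring
        · rw [← mul_add, ← Real.log_mul (by positivity) (by positivity)]
          rw [div_mul_div_comm, mul_comm (T2 x) (R x), mul_div_mul_left _ _ (ne_of_gt hRx)]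
      have hVlog : Real.log (Vα x / R x) = - Real.log (R x / Vα x) := by
        rw [← Real.log_inv, inv_div]
      have hVeq : (1 + α) * Vα x = α * T1 x + T2 x := by
        rw [hVα, mix]; field_simp
      rw [hT1, hT2, hVlog]
      have expand : (1 + α) * (Vα x * - Real.log (R x / Vα x))
          = - ((α * T1 x + T2 x) * Real.log (R x / Vα x)) := by
        rw [show (1 + α) * (Vα x * - Real.log (R x / Vα x))
          = ((1 + α) * Vα x) * (- Real.log (R x / Vα x)) from by ring, hVeq]; ring
      rw [expand]; ring
  have sumeq : α * klDivR T1 Vα + klDivR T2 Vα + (1 + α) * klDivR Vα R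
      = α * klDivR T1 R + klDivR T2 R := by
    simp only [klDivR, Finset.mul_sum, ← Finset.sum_add_distrib]
    exact Finset.sum_congr rfl fun x _ => point x
  have hKL1 : 0 ≤ klDivR Vα R :=
    klDivR_nonneg' Vα R hVα0 (hmixsum α hα) (hmixsum β hβ0)
      (fun x hx _ => by
        rcases hRabs x hx with ⟨ha, hb⟩
        rw [hVα, mix, ha, hb]; simp) hR0
  have hKL2 : 0 ≤ klDivR T1 R :=
    klDivR_nonneg' T1 R h1 h1s (hmixsum β hβ0)
      (fun x hx _ => (hRabs x hx).1) hR0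
  have step1 : GJS T1 T2 α ≤ α * klDivR T1 R + klDivR T2 R := by
    rw [GJS, ← hVα, ← sumeq]
    nlinarith [hKL1, hα.le]
  calc GJS T1 T2 α ≤ α * klDivR T1 R + klDivR T2 R := step1
    _ ≤ β * klDivR T1 R + klDivR T2 R := by nlinarith [hKL2]


set_option maxHeartbeats 1000000 in
lemma key_pair (α lam : ℝ) (hα : 0 < α) (N n : ℕ) (hN : 0 < N) (hn : 0 < n)
    (hαN : α * n ≤ (N:ℝ))
    (k l : X → ℕ) (hk : ∑ a, k a = N) (hl : ∑ a, l a = n)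
    (hev : lam < GJS (fun a => (k a : ℝ)/(N:ℝ)) (fun a => (l a : ℝ)/(n:ℝ)) α) :
    (cardClass X N k : ℝ) * cardClass X n l
      ≤ ((N:ℝ) + n + 1) * Real.exp (-((n:ℝ) * lam)) * cardClass X (N+n) (fun a => k a + l a) := by
  have hNR : (0:ℝ) < N := by exact_mod_cast hN
  have hnR : (0:ℝ) < n := by exact_mod_cast hn
  set T1 : X → ℝ := fun a => (k a : ℝ)/(N:ℝ) with hT1
  set T2 : X → ℝ := fun a => (l a : ℝ)/(n:ℝ) with hT2
  set V : X → ℝ := fun a => ((k a : ℝ) + (l a : ℝ))/((N:ℝ)+(n:ℝ)) with hV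
  have h1 : ∀ a, 0 ≤ T1 a := fun a => by positivity
  have h2 : ∀ a, 0 ≤ T2 a := fun a => by positivity
  have h1s : ∑ a, T1 a = 1 := by
    rw [hT1, ← Finset.sum_div]
    rw [show ∑ a, (k a : ℝ) = ((∑ a, k a : ℕ) : ℝ) from by push_cast; rfl, hk]
    field_simp
  have h2s : ∑ a, T2 a = 1 := by
    rw [hT2, ← Finset.sum_div]
    rw [show ∑ a, (l a : ℝ) = ((∑ a, l a : ℕ) : ℝ) from by push_cast; rfl, hl]
    field_simp
  have hβ : α ≤ (N:ℝ)/(n:ℝ) := (le_div_iff₀ hnR).2 hαN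
  have hmix : mix T1 T2 ((N:ℝ)/(n:ℝ)) = V := by
    funext a
    rw [mix, hT1, hT2, hV]
    have hkN : (N:ℝ) ≠ 0 := hNR.ne'
    have hln : (n:ℝ) ≠ 0 := hnR.ne'
    have hNn : (N:ℝ) + n ≠ 0 := by positivity
    field_simp
    ring
  have hgjs := gjs_le_beta T1 T2 h1 h2 h1s h2s hα hβ
  rw [hmix] at hgjs
  set A := ∏ a, T1 a ^ (k a) with hA
  set B := ∏ a, T2 a ^ (l a) with hB
  set Cc := ∏ a, V a ^ (k a + l a) with hCc
  have hT1pos : ∀ a, 0 < k a → 0 < T1 a := fun a h => by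
    rw [hT1]; have : (0:ℝ) < k a := by exact_mod_cast h
    positivity
  have hT2pos : ∀ a, 0 < l a → 0 < T2 a := fun a h => by
    rw [hT2]; have : (0:ℝ) < l a := by exact_mod_cast h
    positivity
  have hVpos : ∀ a, 0 < k a + l a → 0 < V a := fun a h => by
    rw [hV]
    have : (0:ℝ) < (k a : ℝ) + l a := by exact_mod_cast h
    positivity
  have hApos : 0 < A := Finset.prod_pos fun a _ => by
    rcases Nat.eq_zero_or_pos (k a) with h | h
    · rw [h, pow_zero]; exact one_pos
    · exact pow_pos (hT1pos a h) _
  have hBpos : 0 < B := Finset.prod_pos fun a _ => by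
    rcases Nat.eq_zero_or_pos (l a) with h | h
    · rw [h, pow_zero]; exact one_pos
    · exact pow_pos (hT2pos a h) _
  have hCpos : 0 < Cc := Finset.prod_pos fun a _ => by
    rcases Nat.eq_zero_or_pos (k a + l a) with h | h
    · rw [h, pow_zero]; exact one_pos
    · exact pow_pos (hVpos a h) _
  have hlogA : Real.log A = ∑ a, (k a : ℝ) * Real.log (T1 a) := by
    rw [hA, Real.log_prod (fun a _ => by
      rcases Nat.eq_zero_or_pos (k a) with h | h
      · rw [h, pow_zero]; exact one_ne_zero
      · exact (pow_pos (hT1pos a h) _).ne')]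
    exact Finset.sum_congr rfl fun a _ => by rw [Real.log_pow]
  have hlogB : Real.log B = ∑ a, (l a : ℝ) * Real.log (T2 a) := by
    rw [hB, Real.log_prod (fun a _ => by
      rcases Nat.eq_zero_or_pos (l a) with h | h
      · rw [h, pow_zero]; exact one_ne_zero
      · exact (pow_pos (hT2pos a h) _).ne')]
    exact Finset.sum_congr rfl fun a _ => by rw [Real.log_pow]
  have hlogC : Real.log Cc = ∑ a, ((k a : ℝ) + l a) * Real.log (V a) := by
    rw [hCc, Real.log_prod (fun a _ => by
      rcases Nat.eq_zero_or_pos (k a + l a) with h | h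
      · rw [h, pow_zero]; exact one_ne_zero
      · exact (pow_pos (hVpos a h) _).ne')]
    exact Finset.sum_congr rfl fun a _ => by rw [Real.log_pow]; push_cast; ring
  have hEsum : (n:ℝ) * (((N:ℝ)/(n:ℝ)) * klDivR T1 V + klDivR T2 V)
      = Real.log A + Real.log B - Real.log Cc := by
    rw [hlogA, hlogB, hlogC, klDivR, klDivR]
    have point : ∀ a, (N:ℝ) * (T1 a * Real.log (T1 a / V a))
        + (n:ℝ) * (T2 a * Real.log (T2 a / V a))
        = ((k a:ℝ) * Real.log (T1 a) + (l a:ℝ) * Real.log (T2 a))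
          - ((k a:ℝ) + l a) * Real.log (V a) := by
      intro a
      have e1 : (N:ℝ) * (T1 a * Real.log (T1 a / V a)) = (k a:ℝ) * Real.log (T1 a / V a) := by
        rw [hT1]; field_simp
      have e2 : (n:ℝ) * (T2 a * Real.log (T2 a / V a)) = (l a:ℝ) * Real.log (T2 a / V a) := by
        rw [hT2]; field_simp
      rw [e1, e2]
      have hs1 : (k a:ℝ) * Real.log (T1 a / V a)
          = (k a:ℝ) * Real.log (T1 a) - (k a:ℝ) * Real.log (V a) := by
        rcases Nat.eq_zero_or_pos (k a) with h | h
        · rw [h]; push_cast; ring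
        · rw [Real.log_div (hT1pos a h).ne' (hVpos a (by omega)).ne']; ring
      have hs2 : (l a:ℝ) * Real.log (T2 a / V a)
          = (l a:ℝ) * Real.log (T2 a) - (l a:ℝ) * Real.log (V a) := by
        rcases Nat.eq_zero_or_pos (l a) with h | h
        · rw [h]; push_cast; ring
        · rw [Real.log_div (hT2pos a h).ne' (hVpos a (by omega)).ne']; ring
      rw [hs1, hs2]; ring
    have lhs_eq : (n:ℝ) * (((N:ℝ)/(n:ℝ)) * (∑ x, T1 x * Real.log (T1 x / V x))
        + (∑ x, T2 x * Real.log (T2 x / V x)))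
        = ∑ a, ((N:ℝ) * (T1 a * Real.log (T1 a / V a))
            + (n:ℝ) * (T2 a * Real.log (T2 a / V a))) := by
      rw [Finset.sum_add_distrib, ← Finset.mul_sum, ← Finset.mul_sum]
      field_simp
    rw [lhs_eq, Finset.sum_congr rfl fun a _ => point a]
    rw [Finset.sum_sub_distrib, Finset.sum_add_distrib]
  have hlam : (n:ℝ) * lam ≤ Real.log A + Real.log B - Real.log Cc := by
    have h := mul_le_mul_of_nonneg_left (hev.le.trans hgjs) hnR.le
    rw [hEsum] at h
    exact h
  have hexp : Cc / (A * B) ≤ Real.exp (-((n:ℝ) * lam)) := by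
    have heq : Cc / (A*B) = Real.exp (Real.log Cc - (Real.log A + Real.log B)) := by
      rw [Real.exp_sub, Real.exp_log hCpos, ← Real.log_mul hApos.ne' hBpos.ne',
        Real.exp_log (by positivity)]
    rw [heq, Real.exp_le_exp]
    linarith
  -- counting identities
  have hsumm : ∑ a, (k a + l a) = N + n := by rw [Finset.sum_add_distrib, hk, hl]
  have hKL : (cardClass X N k : ℝ) * (cardClass X n l : ℝ) * ((N+n).choose N : ℝ)
      = (cardClass X (N+n) (fun a => k a + l a) : ℝ) * ∏ a, (((k a + l a).choose (k a) : ℕ) : ℝ) := by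
    rw [cardClass_eq hk, cardClass_eq hl, cardClass_eq hsumm]
    have := multinomial_split N n k l hk hl
    push_cast
    exact_mod_cast congrArg (fun t : ℕ => (t : ℝ)) this
  set K := (cardClass X N k : ℝ) with hKdef
  set L := (cardClass X n l : ℝ) with hLdef
  set M := (cardClass X (N+n) (fun a => k a + l a) : ℝ) with hMdef
  set Pk := ∏ a, ((k a : ℝ)) ^ (k a) with hPk
  set Pl := ∏ a, ((l a : ℝ)) ^ (l a) with hPl
  set Pm := ∏ a, (((k a : ℝ) + l a)) ^ (k a + l a) with hPm
  have hAeq : A = Pk / (N:ℝ)^N := by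
    rw [hA, hPk, hT1]
    simp only [div_pow]
    rw [Finset.prod_div_distrib, Finset.prod_pow_eq_pow_sum, hk]
  have hBeq : B = Pl / (n:ℝ)^n := by
    rw [hB, hPl, hT2]
    simp only [div_pow]
    rw [Finset.prod_div_distrib, Finset.prod_pow_eq_pow_sum, hl]
  have hCeq : Cc = Pm / ((N:ℝ)+n)^(N+n) := by
    rw [hCc, hPm, hV]
    simp only [div_pow]
    rw [Finset.prod_div_distrib, Finset.prod_pow_eq_pow_sum, hsumm]
  have hMnn : 0 ≤ M := by rw [hMdef]; positivity
  have hCchoosepos : (0:ℝ) < ((N+n).choose N : ℝ) := by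
    exact_mod_cast Nat.choose_pos (show N ≤ N + n by omega)
  -- the multiplied-out master inequality
  have hprodle : (∏ a, ((k a + l a).choose (k a) * (k a)^(k a) * (l a)^(l a) : ℕ) : ℝ)
      ≤ ∏ a, ((k a : ℝ) + l a)^(k a + l a) := by
    have hN1 : (∏ a, ((k a + l a).choose (k a) * (k a)^(k a) * (l a)^(l a)))
        ≤ ∏ a, (k a + l a)^(k a + l a) :=
      Finset.prod_le_prod' fun a _ => choose_term_le (k a) (l a)
    calc (∏ a, ((k a + l a).choose (k a) * (k a)^(k a) * (l a)^(l a) : ℕ) : ℝ)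
        ≤ ((∏ a, (k a + l a)^(k a + l a) : ℕ) : ℝ) := by exact_mod_cast hN1
      _ = ∏ a, ((k a : ℝ) + l a)^(k a + l a) := by push_cast; rfl
  have ha2 : ((N:ℝ)+n)^(N+n) ≤ ((N:ℝ)+n+1) * (((N+n).choose N : ℝ) * (N:ℝ)^N * (n:ℝ)^n) := by
    have := pow_add_le N n hn
    calc ((N:ℝ)+n)^(N+n) = (((N+n)^(N+n) : ℕ) : ℝ) := by push_cast; rfl
      _ ≤ (((N + n + 1) * ((N + n).choose N * N ^ N * n ^ n) : ℕ) : ℝ) := by exact_mod_cast this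
      _ = ((N:ℝ)+n+1) * (((N+n).choose N : ℝ) * (N:ℝ)^N * (n:ℝ)^n) := by push_cast; ring
  have HM : K * L * (Pk * Pl) * ((N:ℝ)+n)^(N+n)
      ≤ ((N:ℝ)+n+1) * Pm * ((N:ℝ)^N * (n:ℝ)^n) * M := by
    refine le_of_mul_le_mul_right ?_ hCchoosepos
    have expand1 : K * L * (Pk * Pl) * ((N:ℝ)+n)^(N+n) * ((N+n).choose N : ℝ)
        = (K * L * ((N+n).choose N : ℝ)) * (Pk * Pl) * ((N:ℝ)+n)^(N+n) := by ring
    rw [expand1, hKL]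
    have expand2 : M * (∏ a, (((k a + l a).choose (k a) : ℕ) : ℝ)) * (Pk * Pl) * ((N:ℝ)+n)^(N+n)
        = M * ((N:ℝ)+n)^(N+n) *
          ((∏ a, (((k a + l a).choose (k a) : ℕ) : ℝ)) * Pk * Pl) := by ring
    rw [expand2]
    have hfuse : (∏ a, (((k a + l a).choose (k a) : ℕ) : ℝ)) * Pk * Pl
        = (∏ a, ((k a + l a).choose (k a) * (k a)^(k a) * (l a)^(l a) : ℕ) : ℝ) := by
      rw [hPk, hPl, ← Finset.prod_mul_distrib, ← Finset.prod_mul_distrib]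
      push_cast
      rfl
    rw [hfuse]
    calc M * ((N:ℝ)+n)^(N+n) * (∏ a, ((k a + l a).choose (k a) * (k a)^(k a) * (l a)^(l a) : ℕ) : ℝ)
        ≤ M * ((N:ℝ)+n)^(N+n) * ∏ a, ((k a : ℝ) + l a)^(k a + l a) := by
          refine mul_le_mul_of_nonneg_left hprodle ?_
          positivity
      _ = M * Pm * ((N:ℝ)+n)^(N+n) := by rw [hPm]; ring
      _ ≤ M * Pm * (((N:ℝ)+n+1) * (((N+n).choose N : ℝ) * (N:ℝ)^N * (n:ℝ)^n)) := by
          refine mul_le_mul_of_nonneg_left ha2 ?_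
          have : (0:ℝ) ≤ Pm := by rw [hPm]; positivity
          positivity
      _ = ((N:ℝ)+n+1) * Pm * ((N:ℝ)^N * (n:ℝ)^n) * M * ((N+n).choose N : ℝ) := by ring
  -- conclude
  have step : K * L ≤ ((N:ℝ)+n+1) * (Cc / (A * B)) * M := by
    rw [show ((N:ℝ)+n+1) * (Cc / (A * B)) * M = (((N:ℝ)+n+1) * Cc * M) / (A * B) from by ring]
    rw [le_div_iff₀ (by positivity)]
    rw [hAeq, hBeq, hCeq]
    rw [show K * L * (Pk / (N:ℝ)^N * (Pl / (n:ℝ)^n))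
      = (K * L * (Pk * Pl)) / ((N:ℝ)^N * (n:ℝ)^n) from by ring]
    rw [show ((N:ℝ)+n+1) * (Pm / ((N:ℝ)+n)^(N+n)) * M
      = (((N:ℝ)+n+1) * Pm * M) / ((N:ℝ)+n)^(N+n) from by ring]
    rw [div_le_div_iff₀ (by positivity) (by positivity)]
    calc K * L * (Pk * Pl) * ((N:ℝ)+n)^(N+n) ≤ ((N:ℝ)+n+1) * Pm * ((N:ℝ)^N * (n:ℝ)^n) * M := HM
      _ = ((N:ℝ)+n+1) * Pm * M * ((N:ℝ)^N * (n:ℝ)^n) := by ring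
  calc K * L ≤ ((N:ℝ)+n+1) * (Cc / (A * B)) * M := step
    _ ≤ ((N:ℝ)+n+1) * Real.exp (-((n:ℝ) * lam)) * M := by
        refine mul_le_mul_of_nonneg_right (mul_le_mul_of_nonneg_left hexp (by positivity)) hMnn


lemma sum_seqProb (P : X → ℝ) (hs : ∑ a, P a = 1) (m : ℕ) :
    ∑ x : Fin m → X, seqProb P x = 1 := by
  simp only [seqProb]
  rw [sum_seq_prod m P, hs, one_pow]

lemma seqProb_nonneg {P : X → ℝ} (hP : ∀ a, 0 ≤ P a) {m : ℕ} (x : Fin m → X) :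
    0 ≤ seqProb P x :=
  Finset.prod_nonneg fun i _ => hP (x i)

lemma beta1_le_one {α : ℝ} {n : ℕ} (φ : BTest X α n) (P1 P2 : X → ℝ)
    (h1 : IsDist P1) (h2 : IsDist P2) : beta1 φ P1 P2 ≤ 1 := by
  classical
  have step : beta1 φ P1 P2 ≤ ∑ x1 : Fin (trainLen α n) → X, ∑ x2 : Fin (trainLen α n) → X,
      ∑ y : Fin n → X, seqProb P1 x1 * seqProb P2 x2 * seqProb P1 y := by
    refine Finset.sum_le_sum fun x1 _ => Finset.sum_le_sum fun x2 _ =>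
      Finset.sum_le_sum fun y _ => ?_
    split
    · exact le_refl _
    · exact mul_nonneg (mul_nonneg (seqProb_nonneg h1.1 x1) (seqProb_nonneg h2.1 x2))
        (seqProb_nonneg h1.1 y)
  refine step.trans (le_of_eq ?_)
  have e1 : ∀ (x1 x2 : Fin (trainLen α n) → X),
      ∑ y : Fin n → X, seqProb P1 x1 * seqProb P2 x2 * seqProb P1 y
      = seqProb P1 x1 * seqProb P2 x2 := by
    intro x1 x2
    rw [← Finset.mul_sum, sum_seqProb P1 h1.2 n, mul_one]
  have e2 : ∀ x1 : Fin (trainLen α n) → X,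
      ∑ x2 : Fin (trainLen α n) → X, seqProb P1 x1 * seqProb P2 x2 = seqProb P1 x1 := by
    intro x1
    rw [← Finset.mul_sum, sum_seqProb P2 h2.2, mul_one]
  calc (∑ x1 : Fin (trainLen α n) → X, ∑ x2 : Fin (trainLen α n) → X,
      ∑ y : Fin n → X, seqProb P1 x1 * seqProb P2 x2 * seqProb P1 y)
      = ∑ x1 : Fin (trainLen α n) → X, ∑ x2 : Fin (trainLen α n) → X,
        seqProb P1 x1 * seqProb P2 x2 := by
        exact Finset.sum_congr rfl fun x1 _ => Finset.sum_congr rfl fun x2 _ => e1 x1 x2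
    _ = ∑ x1 : Fin (trainLen α n) → X, seqProb P1 x1 :=
        Finset.sum_congr rfl fun x1 _ => e2 x1
    _ = 1 := sum_seqProb P1 h1.2 _

lemma fibcount [Nonempty X] (N n : ℕ) (m : X → ℕ) :
    (((Finset.univ.piAntidiag N) ×ˢ (Finset.univ.piAntidiag n)).filter
      (fun kl : (X → ℕ) × (X → ℕ) => (fun a => kl.1 a + kl.2 a) = m)).card
      ≤ (N+1)^(Fintype.card X - 1) := by
  classical
  obtain ⟨x0⟩ := (inferInstance : Nonempty X)
  set S := (((Finset.univ.piAntidiag N) ×ˢ (Finset.univ.piAntidiag n)).filter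
      (fun kl : (X → ℕ) × (X → ℕ) => (fun a => kl.1 a + kl.2 a) = m)) with hS
  have hmem : ∀ kl ∈ S, (∑ a, kl.1 a = N) ∧ (∀ a, kl.1 a + kl.2 a = m a) := by
    intro kl hkl
    rw [hS, Finset.mem_filter, Finset.mem_product, Finset.mem_piAntidiag] at hkl
    exact ⟨hkl.1.1.1, fun a => congrFun hkl.2 a⟩
  have hle : ∀ kl ∈ S, ∀ a, kl.1 a ≤ N := by
    intro kl hkl a
    rw [← (hmem kl hkl).1]
    exact Finset.single_le_sum (fun _ _ => Nat.zero_le _) (Finset.mem_univ a)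
  have hinj : Set.InjOn (fun kl : (X → ℕ) × (X → ℕ) => fun a : {a : X // a ≠ x0} =>
      (⟨min (kl.1 a.1) N, by omega⟩ : Fin (N+1))) ↑S := by
    intro kl hkl kl' hkl' heq
    rw [Finset.mem_coe] at hkl hkl'
    have h1 : ∀ a : X, a ≠ x0 → kl.1 a = kl'.1 a := by
      intro a ha
      have := congrFun heq ⟨a, ha⟩
      rw [Fin.mk.injEq] at this
      rwa [min_eq_left (hle kl hkl a), min_eq_left (hle kl' hkl' a)] at this
    have hsum : kl.1 x0 + ∑ a ∈ Finset.univ.erase x0, kl.1 a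
        = kl'.1 x0 + ∑ a ∈ Finset.univ.erase x0, kl'.1 a := by
      rw [Finset.add_sum_erase _ _ (Finset.mem_univ x0),
        Finset.add_sum_erase _ _ (Finset.mem_univ x0), (hmem kl hkl).1, (hmem kl' hkl').1]
    have hE : ∑ a ∈ Finset.univ.erase x0, kl.1 a = ∑ a ∈ Finset.univ.erase x0, kl'.1 a :=
      Finset.sum_congr rfl fun a ha => h1 a (Finset.ne_of_mem_erase ha)
    have hx0 : kl.1 x0 = kl'.1 x0 := by omega
    have hfst : kl.1 = kl'.1 := funext fun a => by
      by_cases h : a = x0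
      · rw [h]; exact hx0
      · exact h1 a h
    have hsnd : kl.2 = kl'.2 := funext fun a => by
      have ha := (hmem kl hkl).2 a
      have hb := (hmem kl' hkl').2 a
      have := congrFun hfst a
      omega
    exact Prod.ext hfst hsnd
  have hcard := Finset.card_le_card_of_injOn _ (fun kl _ =>
    Finset.mem_univ (α := {a : X // a ≠ x0} → Fin (N+1)) _) hinj
  refine hcard.trans ?_
  rw [Finset.card_univ, Fintype.card_fun, Fintype.card_fin]
  have : Fintype.card {a : X // a ≠ x0} = Fintype.card X - 1 := by
    have := Fintype.card_subtype_compl (fun a : X => a = x0)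
    simpa [Fintype.card_subtype_eq] using this
  rw [this]

end GutmanAux



/-- non-asymptotic type-I error bound for Gutman's test:
`β₁(φ_n^Gut | P̃1, P̃2) ≤ (n + N + 1)^{|X|} exp(-nλ)` for all pairs of distributions. -/
theorem gutman_beta1_bound {X : Type*} [Fintype X] [DecidableEq X]
    (α lam : ℝ) (hα : 0 < α) (hlam : 0 < lam) (n : ℕ)
    (Q1 Q2 : X → ℝ) (h1 : IsDist Q1) (h2 : IsDist Q2) :
    beta1 (gutman α lam n) Q1 Q2 ≤
      ((n : ℝ) + (trainLen α n : ℝ) + 1) ^ (Fintype.card X) *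
        Real.exp (-((n : ℝ) * lam)) := by
  classical
  rcases Nat.eq_zero_or_pos n with hn0 | hn
  · subst hn0
    have hb := beta1_le_one (gutman α lam 0) Q1 Q2 h1 h2
    refine hb.trans ?_
    have hexp0 : Real.exp (-(((0:ℕ):ℝ) * lam)) = 1 := by norm_num
    rw [hexp0, mul_one]
    refine one_le_pow₀ ?_
    norm_num
  rcases isEmpty_or_nonempty X with hX | hX
  · have hempty : IsEmpty (Fin n → X) := ⟨fun f => hX.false (f ⟨0, hn⟩)⟩
    have hz : beta1 (gutman α lam n) Q1 Q2 = 0 := by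
      rw [beta1]
      refine Finset.sum_eq_zero fun x1 _ => Finset.sum_eq_zero fun x2 _ => ?_
      rw [Finset.univ_eq_empty, Finset.sum_empty]
    rw [hz]
    positivity
  set N := trainLen α n with hNdef
  have hN : 0 < N := Nat.ceil_pos.2 (by
    have : (0:ℝ) < n := by exact_mod_cast hn
    positivity)
  have hαN : α * n ≤ (N:ℝ) := Nat.le_ceil _
  have hd1 : 1 ≤ Fintype.card X := Fintype.card_pos
  set c : ℝ := ((N:ℝ) + n + 1) * Real.exp (-((n:ℝ) * lam)) with hc
  have hcnn : 0 ≤ c := by rw [hc]; positivity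
  have hq1 : ∀ a, 0 ≤ Q1 a := h1.1
  -- Step A: sum out x2
  have hred : beta1 (gutman α lam n) Q1 Q2
      = ∑ x1 : Fin N → X, ∑ y : Fin n → X,
          (if lam < GJS (empDist x1) (empDist y) α then seqProb Q1 x1 * seqProb Q1 y else 0) := by
    rw [beta1]
    refine Finset.sum_congr rfl fun x1 _ => ?_
    have inner : ∀ x2 : Fin N → X, (∑ y : Fin n → X,
        if gutman α lam n x1 x2 y = true
          then seqProb Q1 x1 * seqProb Q2 x2 * seqProb Q1 y else 0)
        = seqProb Q2 x2 * ∑ y : Fin n → X,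
          (if lam < GJS (empDist x1) (empDist y) α
            then seqProb Q1 x1 * seqProb Q1 y else 0) := by
      intro x2
      rw [Finset.mul_sum]
      refine Finset.sum_congr rfl fun y _ => ?_
      simp only [gutman]
      by_cases hcnd : GJS (empDist x1) (empDist y) α ≤ lam
      · have hb : (if GJS (empDist x1) (empDist y) α ≤ lam then false else true) = false :=
          if_pos hcnd
        simp only [hb]
        simp [not_lt.2 hcnd]
      · have hb : (if GJS (empDist x1) (empDist y) α ≤ lam then false else true) = true :=
          if_neg hcnd
        simp only [hb, if_pos (not_le.1 hcnd)]
        simp only [if_pos]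
        ring
    rw [Finset.sum_congr rfl fun x2 _ => inner x2, ← Finset.sum_mul,
      sum_seqProb Q2 h2.2, one_mul]
  rw [hred]
  -- the comparison function
  set R : (X → ℕ) → (X → ℕ) → ℝ := fun k l =>
    ((cardClass X (N+n) (fun a => k a + l a) : ℝ) * ∏ a, Q1 a ^ (k a + l a))
      / ((cardClass X N k : ℝ) * (cardClass X n l : ℝ)) with hR
  have hRnn : ∀ k l, 0 ≤ R k l := fun k l => by
    rw [hR]
    exact div_nonneg (mul_nonneg (Nat.cast_nonneg _)
      (Finset.prod_nonneg fun a _ => pow_nonneg (hq1 a) _))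
      (mul_nonneg (Nat.cast_nonneg _) (Nat.cast_nonneg _))
  -- Step B: pointwise bound
  have hpoint : ∀ (x1 : Fin N → X) (y : Fin n → X),
      (if lam < GJS (empDist x1) (empDist y) α then seqProb Q1 x1 * seqProb Q1 y else 0)
      ≤ c * R (cnt x1) (cnt y) := by
    intro x1 y
    by_cases hcnd : lam < GJS (empDist x1) (empDist y) α
    · rw [if_pos hcnd]
      have hemp1 : empDist x1 = fun a => (cnt x1 a : ℝ)/(N:ℝ) := rfl
      have hemp2 : empDist y = fun a => (cnt y a : ℝ)/(n:ℝ) := rfl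
      rw [hemp1, hemp2] at hcnd
      have hkey := key_pair α lam hα N n hN hn hαN (cnt x1) (cnt y)
        (sum_cnt x1) (sum_cnt y) hcnd
      have hq : seqProb Q1 x1 * seqProb Q1 y = ∏ a, Q1 a ^ (cnt x1 a + cnt y a) := by
        rw [seqProb, seqProb, prod_comp_cnt x1 Q1, prod_comp_cnt y Q1,
          ← Finset.prod_mul_distrib]
        exact Finset.prod_congr rfl fun a _ => (pow_add _ _ _).symm
      have hqnn : 0 ≤ ∏ a, Q1 a ^ (cnt x1 a + cnt y a) :=
        Finset.prod_nonneg fun a _ => pow_nonneg (hq1 a) _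
      have hK1 : (1:ℝ) ≤ (cardClass X N (cnt x1) : ℝ) := by
        have : 0 < cardClass X N (cnt x1) :=
          Finset.card_pos.2 ⟨x1, Finset.mem_filter.2 ⟨Finset.mem_univ _, rfl⟩⟩
        exact_mod_cast this
      have hL1 : (1:ℝ) ≤ (cardClass X n (cnt y) : ℝ) := by
        have : 0 < cardClass X n (cnt y) :=
          Finset.card_pos.2 ⟨y, Finset.mem_filter.2 ⟨Finset.mem_univ _, rfl⟩⟩
        exact_mod_cast this
      have hKLpos : 0 < (cardClass X N (cnt x1) : ℝ) * (cardClass X n (cnt y) : ℝ) := by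
        nlinarith
      have expand : c * R (cnt x1) (cnt y)
          = (c * (cardClass X (N+n) (fun a => cnt x1 a + cnt y a) : ℝ)
              * ∏ a, Q1 a ^ (cnt x1 a + cnt y a))
            / ((cardClass X N (cnt x1) : ℝ) * (cardClass X n (cnt y) : ℝ)) := by
        rw [hR]; ring
      rw [hq, expand, le_div_iff₀ hKLpos]
      have hkey' : (cardClass X N (cnt x1) : ℝ) * (cardClass X n (cnt y) : ℝ)
          ≤ c * (cardClass X (N+n) (fun a => cnt x1 a + cnt y a) : ℝ) := by
        rw [hc]
        calc (cardClass X N (cnt x1) : ℝ) * (cardClass X n (cnt y) : ℝ)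
            ≤ ((N:ℝ) + n + 1) * Real.exp (-((n:ℝ) * lam))
              * (cardClass X (N+n) (fun a => cnt x1 a + cnt y a) : ℝ) := hkey
          _ = ((N:ℝ) + n + 1) * Real.exp (-((n:ℝ) * lam))
              * (cardClass X (N+n) (fun a => cnt x1 a + cnt y a) : ℝ) := by ring
      calc (∏ a, Q1 a ^ (cnt x1 a + cnt y a))
            * ((cardClass X N (cnt x1) : ℝ) * (cardClass X n (cnt y) : ℝ))
          ≤ (∏ a, Q1 a ^ (cnt x1 a + cnt y a))
            * (c * (cardClass X (N+n) (fun a => cnt x1 a + cnt y a) : ℝ)) :=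
            mul_le_mul_of_nonneg_left hkey' hqnn
        _ = c * (cardClass X (N+n) (fun a => cnt x1 a + cnt y a) : ℝ)
            * ∏ a, Q1 a ^ (cnt x1 a + cnt y a) := by ring
    · rw [if_neg hcnd]
      exact mul_nonneg hcnn (hRnn _ _)
  have hsum1 : (∑ x1 : Fin N → X, ∑ y : Fin n → X,
      (if lam < GJS (empDist x1) (empDist y) α then seqProb Q1 x1 * seqProb Q1 y else 0))
      ≤ c * ∑ x1 : Fin N → X, ∑ y : Fin n → X, R (cnt x1) (cnt y) := by
    rw [Finset.mul_sum]
    refine Finset.sum_le_sum fun x1 _ => ?_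
    rw [Finset.mul_sum]
    exact Finset.sum_le_sum fun y _ => hpoint x1 y
  -- Step C: bound the R-sum
  have hgroup : (∑ x1 : Fin N → X, ∑ y : Fin n → X, R (cnt x1) (cnt y))
      ≤ ((N:ℝ)+1)^(Fintype.card X - 1) := by
    rw [← Finset.sum_product' Finset.univ Finset.univ (fun x1 y => R (cnt x1) (cnt y))]
    set AB := ((Finset.univ : Finset X).piAntidiag N) ×ˢ ((Finset.univ : Finset X).piAntidiag n) with hAB
    rw [← Finset.sum_fiberwise_of_maps_to
      (g := fun p : (Fin N → X) × (Fin n → X) => (cnt p.1, cnt p.2)) (t := AB)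
      (fun p _ => by
        rw [hAB]
        exact Finset.mem_product.2
          ⟨by simp [Finset.mem_piAntidiag, sum_cnt], by simp [Finset.mem_piAntidiag, sum_cnt]⟩)
      (fun p => R (cnt p.1) (cnt p.2))]
    have hfib : ∀ kl ∈ AB,
        (∑ p ∈ (Finset.univ ×ˢ Finset.univ).filter
            (fun p : (Fin N → X) × (Fin n → X) => (cnt p.1, cnt p.2) = kl),
          R (cnt p.1) (cnt p.2))
        ≤ (cardClass X (N+n) (fun a => kl.1 a + kl.2 a) : ℝ)
            * ∏ a, Q1 a ^ (kl.1 a + kl.2 a) := by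
      intro kl _
      have hconst : ∀ p ∈ (Finset.univ ×ˢ Finset.univ).filter
          (fun p : (Fin N → X) × (Fin n → X) => (cnt p.1, cnt p.2) = kl),
          R (cnt p.1) (cnt p.2) = R kl.1 kl.2 := by
        intro p hp
        have h := (Finset.mem_filter.1 hp).2
        have ha : cnt p.1 = kl.1 := congrArg Prod.fst h
        have hb : cnt p.2 = kl.2 := congrArg Prod.snd h
        rw [ha, hb]
      rw [Finset.sum_congr rfl hconst, Finset.sum_const, nsmul_eq_mul]
      have hcardfib : (((Finset.univ ×ˢ Finset.univ)).filter
          (fun p : (Fin N → X) × (Fin n → X) => (cnt p.1, cnt p.2) = kl)).card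
          = cardClass X N kl.1 * cardClass X n kl.2 := by
        have hsplit : ((Finset.univ ×ˢ Finset.univ)).filter
            (fun p : (Fin N → X) × (Fin n → X) => (cnt p.1, cnt p.2) = kl)
            = (Finset.univ.filter fun w : Fin N → X => cnt w = kl.1)
              ×ˢ (Finset.univ.filter fun w : Fin n → X => cnt w = kl.2) := by
          ext p
          simp [Finset.mem_filter, Finset.mem_product, Prod.ext_iff]
        rw [hsplit, Finset.card_product]
        rfl
      rw [hcardfib]
      push_cast
      rw [hR]
      rcases eq_or_ne ((cardClass X N kl.1 : ℝ) * (cardClass X n kl.2 : ℝ)) 0 with hz | hz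
      · rw [show ((cardClass X N kl.1 : ℝ) * (cardClass X n kl.2 : ℝ))
          * (((cardClass X (N+n) (fun a => kl.1 a + kl.2 a) : ℝ)
              * ∏ a, Q1 a ^ (kl.1 a + kl.2 a))
            / ((cardClass X N kl.1 : ℝ) * (cardClass X n kl.2 : ℝ)))
          = 0 from by rw [hz]; ring]
        exact mul_nonneg (Nat.cast_nonneg _)
          (Finset.prod_nonneg fun a _ => pow_nonneg (hq1 a) _)
      · rw [mul_comm ((cardClass X N kl.1 : ℝ) * (cardClass X n kl.2 : ℝ))
            ((((cardClass X (N+n) (fun a => kl.1 a + kl.2 a) : ℝ))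
              * ∏ a, Q1 a ^ (kl.1 a + kl.2 a))
            / ((cardClass X N kl.1 : ℝ) * (cardClass X n kl.2 : ℝ))),
          div_mul_cancel₀ _ hz]
    refine (Finset.sum_le_sum hfib).trans ?_
    -- second grouping
    rw [← Finset.sum_fiberwise_of_maps_to
      (g := fun kl : (X → ℕ) × (X → ℕ) => (fun a => kl.1 a + kl.2 a))
      (t := Finset.univ.piAntidiag (N+n))
      (fun kl hkl => by
        rw [hAB, Finset.mem_product, Finset.mem_piAntidiag, Finset.mem_piAntidiag] at hkl
        rw [Finset.mem_piAntidiag]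
        refine ⟨?_, fun a _ => Finset.mem_univ a⟩
        rw [Finset.sum_add_distrib, hkl.1.1, hkl.2.1])
      (fun kl => (cardClass X (N+n) (fun a => kl.1 a + kl.2 a) : ℝ)
        * ∏ a, Q1 a ^ (kl.1 a + kl.2 a))]
    have hout : ∀ m ∈ Finset.univ.piAntidiag (N+n),
        (∑ kl ∈ AB.filter (fun kl : (X → ℕ) × (X → ℕ) => (fun a => kl.1 a + kl.2 a) = m),
          (cardClass X (N+n) (fun a => kl.1 a + kl.2 a) : ℝ) * ∏ a, Q1 a ^ (kl.1 a + kl.2 a))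
        ≤ ((N:ℝ)+1)^(Fintype.card X - 1)
          * ((cardClass X (N+n) m : ℝ) * ∏ a, Q1 a ^ m a) := by
      intro m _
      have hconst : ∀ kl ∈ AB.filter
          (fun kl : (X → ℕ) × (X → ℕ) => (fun a => kl.1 a + kl.2 a) = m),
          (cardClass X (N+n) (fun a => kl.1 a + kl.2 a) : ℝ) * ∏ a, Q1 a ^ (kl.1 a + kl.2 a)
          = (cardClass X (N+n) m : ℝ) * ∏ a, Q1 a ^ m a := by
        intro kl hkl
        have h := (Finset.mem_filter.1 hkl).2
        rw [show (fun a => kl.1 a + kl.2 a) = m from h]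
        refine congrArg _ (Finset.prod_congr rfl fun a _ => ?_)
        rw [congrFun h a]
      rw [Finset.sum_congr rfl hconst, Finset.sum_const, nsmul_eq_mul]
      have hcount := fibcount (X := X) N n m
      have hcountR : ((AB.filter
          (fun kl : (X → ℕ) × (X → ℕ) => (fun a => kl.1 a + kl.2 a) = m)).card : ℝ)
          ≤ ((N:ℝ)+1)^(Fintype.card X - 1) := by
        rw [hAB]
        calc ((((Finset.univ.piAntidiag N) ×ˢ (Finset.univ.piAntidiag n)).filter
            (fun kl : (X → ℕ) × (X → ℕ) => (fun a => kl.1 a + kl.2 a) = m)).card : ℝ)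
            ≤ (((N+1)^(Fintype.card X - 1) : ℕ) : ℝ) := by exact_mod_cast hcount
          _ = ((N:ℝ)+1)^(Fintype.card X - 1) := by push_cast; ring
      exact mul_le_mul_of_nonneg_right hcountR
        (mul_nonneg (Nat.cast_nonneg _)
          (Finset.prod_nonneg fun a _ => pow_nonneg (hq1 a) _))
    refine (Finset.sum_le_sum hout).trans ?_
    rw [← Finset.mul_sum]
    have hone : (∑ m ∈ Finset.univ.piAntidiag (N+n),
        (cardClass X (N+n) m : ℝ) * ∏ a, Q1 a ^ m a) = 1 := by
      rw [sum_cardClass (N+n) Q1, h1.2, one_pow]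
    rw [hone, mul_one]
  -- Step D: conclude
  refine hsum1.trans ?_
  refine (mul_le_mul_of_nonneg_left hgroup hcnn).trans ?_
  rw [hc]
  have hb : ((N:ℝ)+1) ≤ (n:ℝ) + N + 1 := by
    have : (0:ℝ) ≤ n := Nat.cast_nonneg n
    linarith
  have hpow : ((N:ℝ)+1)^(Fintype.card X - 1) ≤ ((n:ℝ)+N+1)^(Fintype.card X - 1) :=
    pow_le_pow_left₀ (by positivity) hb _
  calc ((N:ℝ) + n + 1) * Real.exp (-((n:ℝ) * lam)) * ((N:ℝ)+1)^(Fintype.card X - 1)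
      ≤ ((N:ℝ) + n + 1) * Real.exp (-((n:ℝ) * lam)) * ((n:ℝ)+N+1)^(Fintype.card X - 1) :=
        mul_le_mul_of_nonneg_left hpow (by positivity)
    _ = ((n:ℝ)+N+1)^(Fintype.card X - 1) * ((n:ℝ)+N+1) * Real.exp (-((n:ℝ) * lam)) := by
        ring
    _ = ((n:ℝ)+N+1)^(Fintype.card X - 1 + 1) * Real.exp (-((n:ℝ) * lam)) := by
        rw [pow_succ]
    _ = ((n:ℝ) + (N:ℝ) + 1)^(Fintype.card X) * Real.exp (-((n:ℝ) * lam)) := by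
        rw [show Fintype.card X - 1 + 1 = Fintype.card X from by omega]

end Classification
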